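/- Let G be a finite group which is almost of characteristic p, and let P be a p-subgroup of G. Then O_{p'}(N_G(P)) = O_{p'}(G) ∩ N_G(P) = O_{p'}(G) ∩ C_G(P) = O_{p'}(C_G(P)). -/

import Mathlib

variable (p : ℕ) (G : Type*) [Group G]

/-- `O_p(G)`: the join of all normal `p`-subgroups of `G` (the largest normal `p`-subgroup
when `G` is finite). -/
def pCore : Subgroup G :=
  ⨆ H : {H : Subgroup G // H.Normal ∧ IsPGroup p H}, H.1

/-- `O_{p'}(G)`: the join of all normal subgroups of order coprime to `p` (the largest normal
`p'`-subgroup when `G` is finite). -/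
def pPrimeCore : Subgroup G :=
  ⨆ H : {H : Subgroup G // H.Normal ∧ Nat.Coprime (Nat.card H) p}, H.1

lemma iSup_normal {G : Type*} [Group G] {ι : Sort*} (H : ι → Subgroup G)
    (h : ∀ i, (H i).Normal) : (⨆ i, H i).Normal := by
  constructor
  intro n hn g
  refine Subgroup.iSup_induction (C := fun x => g * x * g⁻¹ ∈ ⨆ i, H i) H hn
    (fun i x hx => ?_) ?_ (fun x y hx hy => ?_)
  · exact Subgroup.mem_iSup_of_mem i ((h i).conj_mem x hx g)
  · simpa using Subgroup.one_mem (⨆ i, H i)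
  · have e : g * (x * y) * g⁻¹ = (g * x * g⁻¹) * (g * y * g⁻¹) := by group
    show g * (x * y) * g⁻¹ ∈ ⨆ i, H i
    rw [e]; exact mul_mem hx hy

instance pCore_normal : (pCore p G).Normal := iSup_normal _ (fun i => i.2.1)

instance pPrimeCore_normal : (pPrimeCore p G).Normal := iSup_normal _ (fun i => i.2.1)

/-- A group `G` is of characteristic `p` if `C_G(O_p(G)) ≤ O_p(G)`. -/
def IsCharP : Prop :=
  Subgroup.centralizer ((pCore p G : Subgroup G) : Set G) ≤ pCore p G

/-- A group `G` is almost of characteristic `p` if `G/O_{p'}(G)` is of characteristic `p`. -/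
def IsAlmostCharP : Prop := IsCharP p (G ⧸ pPrimeCore p G)

section AuxProofs

open Subgroup

variable {p : ℕ} {G : Type*} [Group G]

lemma le_pPrimeCore' {H : Subgroup G} (h1 : H.Normal) (h2 : Nat.Coprime (Nat.card H) p) :
    H ≤ pPrimeCore p G :=
  le_iSup_of_le (⟨H, h1, h2⟩ : {H : Subgroup G // H.Normal ∧ Nat.Coprime (Nat.card H) p}) le_rfl

lemma le_pCore' {H : Subgroup G} (h1 : H.Normal) (h2 : IsPGroup p H) :
    H ≤ pCore p G :=
  le_iSup_of_le (⟨H, h1, h2⟩ : {H : Subgroup G // H.Normal ∧ IsPGroup p H}) le_rfl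

lemma card_sup_dvd' [Finite G] (H N : Subgroup G) [N.Normal] :
    Nat.card ↥(H ⊔ N) ∣ Nat.card H * Nat.card N := by
  rw [Subgroup.card_eq_card_quotient_mul_card_subgroup (N.subgroupOf (H ⊔ N))]
  apply Nat.mul_dvd_mul
  · exact (Nat.card_congr
      (QuotientGroup.quotientInfEquivProdNormalQuotient H N).toEquiv).symm.dvd.trans
      (Subgroup.card_quotient_dvd_card _)
  · exact (Nat.card_congr (Subgroup.subgroupOfEquivOfLe (le_sup_right : N ≤ H ⊔ N)).toEquiv).dvd

lemma pPrimeCore_coprime (p : ℕ) (G : Type*) [Group G] [Finite G] :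
    Nat.Coprime (Nat.card (pPrimeCore p G)) p := by
  classical
  haveI : Finite (Subgroup G) :=
    Finite.of_injective (fun H : Subgroup G => (H : Set G)) SetLike.coe_injective
  set S : Set (Subgroup G) := {H | H.Normal ∧ Nat.Coprime (Nat.card H) p} with hS
  have hbot : (⊥ : Subgroup G) ∈ S := ⟨inferInstance, by simp⟩
  obtain ⟨M, hM, hMmax⟩ := Set.Finite.exists_maximalFor id S (Set.toFinite S) ⟨⊥, hbot⟩
  have hub : ∀ H ∈ S, H ≤ M := by
    intro H hH
    haveI := hH.1; haveI := hM.1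
    have hsup : (H ⊔ M) ∈ S := by
      refine ⟨inferInstance, Nat.Coprime.coprime_dvd_left (card_sup_dvd' H M) (hH.2.mul hM.2)⟩
    have hMeq : M = H ⊔ M := le_antisymm le_sup_right (hMmax hsup le_sup_right)
    rw [hMeq]; exact le_sup_left
  have heq : pPrimeCore p G = M :=
    le_antisymm (iSup_le fun H => hub H.1 ⟨H.2.1, H.2.2⟩) (le_pPrimeCore' hM.1 hM.2)
  rw [heq]; exact hM.2

lemma pCore_isPGroup (p : ℕ) (G : Type*) [Group G] [Finite G] :
    IsPGroup p (pCore p G) := by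
  classical
  haveI : Finite (Subgroup G) :=
    Finite.of_injective (fun H : Subgroup G => (H : Set G)) SetLike.coe_injective
  set S : Set (Subgroup G) := {H | H.Normal ∧ IsPGroup p H} with hS
  have hbot : (⊥ : Subgroup G) ∈ S := ⟨inferInstance, IsPGroup.of_bot⟩
  obtain ⟨M, hM, hMmax⟩ := Set.Finite.exists_maximalFor id S (Set.toFinite S) ⟨⊥, hbot⟩
  have hub : ∀ H ∈ S, H ≤ M := by
    intro H hH
    haveI := hH.1; haveI := hM.1
    have hsup : (H ⊔ M) ∈ S := ⟨inferInstance, IsPGroup.to_sup_of_normal_right hH.2 hM.2⟩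
    have hMeq : M = H ⊔ M := le_antisymm le_sup_right (hMmax hsup le_sup_right)
    rw [hMeq]; exact le_sup_left
  have heq : pCore p G = M :=
    le_antisymm (iSup_le fun H => hub H.1 ⟨H.2.1, H.2.2⟩) (le_pCore' hM.1 hM.2)
  rw [heq]; exact hM.2

end AuxProofs


section AuxProofs2

open Subgroup

variable {p : ℕ} {G : Type*} [Group G]

/-- Any `p'`-subgroup of `K` (as a subgroup of `G`) which is invariant under conjugation by `K`
is contained in the image of `pPrimeCore p K`. -/
lemma le_thetaMap {K X : Subgroup G} (hXK : X ≤ K)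
    (hconj : ∀ k ∈ K, ∀ x ∈ X, k * x * k⁻¹ ∈ X)
    (hcard : Nat.Coprime (Nat.card X) p) :
    X ≤ Subgroup.map K.subtype (pPrimeCore p K) := by
  have hnormal : (X.subgroupOf K).Normal := by
    constructor
    rintro ⟨x, hxK⟩ hx ⟨k, hkK⟩
    simpa [Subgroup.mem_subgroupOf] using hconj k hkK x (by simpa [Subgroup.mem_subgroupOf] using hx)
  have hcard' : Nat.Coprime (Nat.card (X.subgroupOf K)) p := by
    have : Nat.card (X.subgroupOf K) = Nat.card X :=
      Nat.card_congr (Subgroup.subgroupOfEquivOfLe hXK).toEquiv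
    rwa [this]
  have h := Subgroup.map_mono (f := K.subtype) (le_pPrimeCore' hnormal hcard')
  rwa [Subgroup.subgroupOf_map_subtype, inf_eq_left.mpr hXK] at h

lemma thetaMap_conj_mem {K : Subgroup G} {k x : G} (hk : k ∈ K)
    (hx : x ∈ Subgroup.map K.subtype (pPrimeCore p K)) :
    k * x * k⁻¹ ∈ Subgroup.map K.subtype (pPrimeCore p K) := by
  obtain ⟨⟨y, hyK⟩, hyθ, rfl⟩ := hx
  exact ⟨⟨k, hk⟩ * ⟨y, hyK⟩ * (⟨k, hk⟩ : K)⁻¹,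
    (pPrimeCore_normal p K).conj_mem _ hyθ _, rfl⟩

lemma thetaMap_coprime [Finite G] (K : Subgroup G) :
    Nat.Coprime (Nat.card (Subgroup.map K.subtype (pPrimeCore p K))) p := by
  have h : Nat.card (Subgroup.map K.subtype (pPrimeCore p K)) = Nat.card (pPrimeCore p K) :=
    (Nat.card_congr (Subgroup.equivMapOfInjective _ _ K.subtype_injective).toEquiv).symm
  rw [h]
  exact pPrimeCore_coprime p K

lemma thetaMap_le {K : Subgroup G} : Subgroup.map K.subtype (pPrimeCore p K) ≤ K :=
  Subgroup.map_subtype_le _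

/-- conjugation by an element normalizing `K` preserves the image of `pPrimeCore p K`. -/
lemma thetaMap_conj_mem_of_normalizes [Finite G] {K : Subgroup G} {n : G}
    (hn : ∀ k ∈ K, n * k * n⁻¹ ∈ K) (hn' : ∀ k ∈ K, n⁻¹ * k * n ∈ K)
    {x : G} (hx : x ∈ Subgroup.map K.subtype (pPrimeCore p K)) :
    n * x * n⁻¹ ∈ Subgroup.map K.subtype (pPrimeCore p K) := by
  set X := Subgroup.map K.subtype (pPrimeCore p K) with hX
  set φ := (MulAut.conj n).toMonoidHom with hφ
  have hφx : ∀ y : G, φ y = n * y * n⁻¹ := fun y => rfl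
  set X' := Subgroup.map φ X with hX'
  have hX'le : X' ≤ K := by
    rintro _ ⟨y, hy, rfl⟩
    exact hn y (thetaMap_le hy)
  have hconj : ∀ k ∈ K, ∀ y ∈ X', k * y * k⁻¹ ∈ X' := by
    intro k hk y hy
    obtain ⟨z, hz, rfl⟩ := hy
    refine ⟨(n⁻¹ * k * n) * z * (n⁻¹ * k * n)⁻¹, thetaMap_conj_mem (hn' k hk) hz, ?_⟩
    rw [hφx, hφx]
    group
  have hcard : Nat.Coprime (Nat.card X') p := by
    have h : Nat.card X' = Nat.card X :=
      (Nat.card_congr (Subgroup.equivMapOfInjective _ _ (MulAut.conj n).injective).toEquiv).symm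
    rw [h]
    have h2 : Nat.card X = Nat.card (pPrimeCore p K) :=
      (Nat.card_congr (Subgroup.equivMapOfInjective _ _ K.subtype_injective).toEquiv).symm
    rw [h2]
    exact pPrimeCore_coprime p K
  have := le_thetaMap hX'le hconj hcard
  exact this ⟨x, hx, by rw [hφx]⟩

lemma eq_one_of_mem_pgroup_coprime [Finite G] [Fact p.Prime] {A B : Subgroup G}
    (hA : IsPGroup p A) (hB : Nat.Coprime (Nat.card B) p) {x : G}
    (hxA : x ∈ A) (hxB : x ∈ B) : x = 1 := by
  have h1 : Nat.card ↥(A ⊓ B) ∣ Nat.card A := Subgroup.card_dvd_of_le inf_le_left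
  have h2 : Nat.card ↥(A ⊓ B) ∣ Nat.card B := Subgroup.card_dvd_of_le inf_le_right
  obtain ⟨n, hn⟩ := IsPGroup.iff_card.mp hA
  rw [hn] at h1
  have hco : Nat.Coprime (p ^ n) (Nat.card B) := Nat.Coprime.pow_left n hB.symm
  have hcard1 : Nat.card ↥(A ⊓ B) = 1 := Nat.eq_one_of_dvd_coprimes hco h1 h2
  have hbot : A ⊓ B = ⊥ := Subgroup.card_eq_one.mp hcard1
  have : x ∈ A ⊓ B := ⟨hxA, hxB⟩
  rwa [hbot, Subgroup.mem_bot] at this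

end AuxProofs2


section AuxProofs3

open Subgroup

variable {p : ℕ} {G : Type*} [Group G]

lemma inv_conj_mem_of_mem_normalizer {R : Subgroup G} {n h : G}
    (hn : n ∈ (Subgroup.normalizer (R : Set G))) (hh : h ∈ R) : n⁻¹ * h * n ∈ R := by
  have h2 := Subgroup.mem_normalizer_iff.mp hn (n⁻¹ * h * n)
  apply h2.mpr
  have e : n * (n⁻¹ * h * n) * n⁻¹ = h := by group
  rwa [e]

lemma centralizer_conj_mem {R : Subgroup G} {n c : G} (hn : n ∈ (Subgroup.normalizer (R : Set G)))
    (hc : c ∈ Subgroup.centralizer (R : Set G)) :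
    n * c * n⁻¹ ∈ Subgroup.centralizer (R : Set G) := by
  rw [Subgroup.mem_centralizer_iff] at hc ⊢
  intro h hh
  have hh' : n⁻¹ * h * n ∈ R := inv_conj_mem_of_mem_normalizer hn hh
  have hcomm := hc _ hh'
  calc h * (n * c * n⁻¹) = n * ((n⁻¹ * h * n) * c) * n⁻¹ := by group
    _ = n * (c * (n⁻¹ * h * n)) * n⁻¹ := by rw [hcomm]
    _ = (n * c * n⁻¹) * h := by group

lemma centralizer_le_normalizer' {R : Subgroup G} :
    Subgroup.centralizer (R : Set G) ≤ (Subgroup.normalizer (R : Set G)) := by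
  intro c hc
  rw [Subgroup.mem_centralizer_iff] at hc
  rw [Subgroup.mem_normalizer_iff]
  intro h
  constructor
  · intro hh
    have e : c * h * c⁻¹ = h := by rw [← hc h hh]; group
    rwa [e]
  · intro hh
    have e := hc _ hh
    have e2 : h = c * h * c⁻¹ := by
      apply mul_left_cancel (a := c)
      calc c * h = (c * h * c⁻¹) * c := by group
        _ = c * (c * h * c⁻¹) := e
    rwa [← e2] at hh

lemma exists_centralizer_lift (p : ℕ) [Fact p.Prime] {G : Type*} [Group G] [Finite G]
    (P : Subgroup G) (hP : IsPGroup p P) (k : G ⧸ pPrimeCore p G)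
    (hk : k ∈ Subgroup.centralizer
      ((P.map (QuotientGroup.mk' (pPrimeCore p G))) : Set (G ⧸ pPrimeCore p G))) :
    ∃ c ∈ Subgroup.centralizer (P : Set G), QuotientGroup.mk' (pPrimeCore p G) c = k := by
  classical
  obtain ⟨g, rfl⟩ := QuotientGroup.mk'_surjective (pPrimeCore p G) k
  have hmemF : ∀ (u : G), u ∈ P → ∀ (x : G),
      QuotientGroup.mk' (pPrimeCore p G) x = QuotientGroup.mk' (pPrimeCore p G) g →
      QuotientGroup.mk' (pPrimeCore p G) (u * x * u⁻¹) = QuotientGroup.mk' (pPrimeCore p G) g := by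
    intro u hu x hx
    have hcomm : QuotientGroup.mk' (pPrimeCore p G) u * QuotientGroup.mk' (pPrimeCore p G) g
        = QuotientGroup.mk' (pPrimeCore p G) g * QuotientGroup.mk' (pPrimeCore p G) u :=
      Subgroup.mem_centralizer_iff.mp hk _ ⟨u, hu, rfl⟩
    rw [map_mul, map_mul, map_inv, hx, hcomm]
    group
  letI : SMul P {x : G // QuotientGroup.mk' (pPrimeCore p G) x
      = QuotientGroup.mk' (pPrimeCore p G) g} :=
    ⟨fun u x => ⟨(u : G) * x * (u : G)⁻¹, hmemF u u.2 x x.2⟩⟩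
  letI : MulAction P {x : G // QuotientGroup.mk' (pPrimeCore p G) x
      = QuotientGroup.mk' (pPrimeCore p G) g} :=
    { one_smul := fun x => by
        ext
        show ((1 : P) : G) * x * ((1 : P) : G)⁻¹ = x
        simp
      mul_smul := fun u v x => by
        ext
        show ((u * v : P) : G) * x * ((u * v : P) : G)⁻¹ =
          (u : G) * ((v : G) * (x : G) * (v : G)⁻¹) * (u : G)⁻¹
        push_cast
        group }
  have hfiber : ∀ x : G, QuotientGroup.mk' (pPrimeCore p G) x
      = QuotientGroup.mk' (pPrimeCore p G) g ↔ x⁻¹ * g ∈ pPrimeCore p G := by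
    intro x
    simp only [QuotientGroup.mk'_apply]
    exact QuotientGroup.eq
  have e : ↥(pPrimeCore p G) ≃ {x : G // QuotientGroup.mk' (pPrimeCore p G) x
      = QuotientGroup.mk' (pPrimeCore p G) g} :=
    { toFun := fun z => ⟨g * (z : G), by
        rw [hfiber]
        simpa using inv_mem z.2⟩
      invFun := fun x => ⟨g⁻¹ * (x : G), by
        have h2 := (hfiber x).mp x.2
        simpa using inv_mem h2⟩
      left_inv := fun z => by ext; simp
      right_inv := fun x => by ext; simp }
  have hpF : ¬ (p ∣ Nat.card {x : G // QuotientGroup.mk' (pPrimeCore p G) x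
      = QuotientGroup.mk' (pPrimeCore p G) g}) := by
    rw [Nat.card_congr e.symm]
    intro hdvd
    have hco := pPrimeCore_coprime p G
    have h2 : p ∣ Nat.gcd (Nat.card (pPrimeCore p G)) p := Nat.dvd_gcd hdvd dvd_rfl
    rw [Nat.Coprime] at hco
    rw [hco] at h2
    exact (Nat.Prime.one_lt (Fact.out (p := p.Prime))).ne' (Nat.dvd_one.mp h2)
  obtain ⟨a, ha⟩ := IsPGroup.nonempty_fixed_point_of_prime_not_dvd_card
    (hG := hP) {x : G // QuotientGroup.mk' (pPrimeCore p G) x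
      = QuotientGroup.mk' (pPrimeCore p G) g} hpF
  refine ⟨(a : G), ?_, a.2⟩
  rw [Subgroup.mem_centralizer_iff]
  intro h hh
  have hfix := (MulAction.mem_fixedPoints).mp ha ⟨h, hh⟩
  have heq : h * (a : G) * h⁻¹ = (a : G) := congrArg Subtype.val hfix
  calc h * (a : G) = (h * a * h⁻¹) * h := by group
    _ = (a : G) * h := by rw [heq]

end AuxProofs3


section AuxProofs4

open Subgroup

/-- In a finite group of characteristic `p`, the `p'`-core of the centralizer of any
`p`-subgroup is trivial. -/
lemma theta_centralizer_eq_bot (p : ℕ) [Fact p.Prime] {H : Type*} [Group H] [Finite H]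
    (hchar : IsCharP p H) (R : Subgroup H) (hR : IsPGroup p R) :
    Subgroup.map (Subgroup.centralizer (R : Set H)).subtype
      (pPrimeCore p (Subgroup.centralizer (R : Set H))) = ⊥ := by
  have case1 : ∀ (R : Subgroup H), pCore p H ≤ R →
      Subgroup.map (Subgroup.centralizer (R : Set H)).subtype
        (pPrimeCore p (Subgroup.centralizer (R : Set H))) = ⊥ := by
    intro R hQR
    set X := Subgroup.map (Subgroup.centralizer (R : Set H)).subtype
        (pPrimeCore p (Subgroup.centralizer (R : Set H))) with hX
    have hXQ : X ≤ pCore p H := by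
      have h1 : X ≤ Subgroup.centralizer (R : Set H) := thetaMap_le
      have h2 : Subgroup.centralizer (R : Set H) ≤
          Subgroup.centralizer ((pCore p H : Subgroup H) : Set H) :=
        Subgroup.centralizer_le (fun y hy => hQR hy)
      exact (h1.trans h2).trans hchar
    have hXp : IsPGroup p X := (pCore_isPGroup p H).to_le hXQ
    obtain ⟨n, hn⟩ := IsPGroup.iff_card.mp hXp
    have hco : Nat.Coprime (Nat.card X) p := thetaMap_coprime _
    rw [hn] at hco
    have hn0 : n = 0 := by
      by_contra hne
      have hd : p ∣ p ^ n := dvd_pow_self p hne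
      have h2 : p ∣ Nat.gcd (p ^ n) p := Nat.dvd_gcd hd dvd_rfl
      rw [Nat.Coprime] at hco
      rw [hco] at h2
      exact (Nat.Prime.one_lt (Fact.out (p := p.Prime))).ne' (Nat.dvd_one.mp h2)
    apply Subgroup.card_eq_one.mp
    rw [hn, hn0, pow_zero]
  suffices main : ∀ (k : ℕ) (R : Subgroup H), IsPGroup p R →
      Nat.card H - Nat.card R ≤ k →
      Subgroup.map (Subgroup.centralizer (R : Set H)).subtype
        (pPrimeCore p (Subgroup.centralizer (R : Set H))) = ⊥ by
    exact main (Nat.card H) R hR (Nat.sub_le _ _)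
  intro k
  induction k with
  | zero =>
      intro R hR hle
      apply case1
      have h1 : Nat.card R ∣ Nat.card H := Subgroup.card_subgroup_dvd_card R
      have h2 : Nat.card R ≤ Nat.card H := Nat.le_of_dvd Nat.card_pos h1
      have h3 : Nat.card R = Nat.card H := by omega
      have h4 : R = ⊤ := Subgroup.eq_top_of_card_eq R h3
      rw [h4]; exact le_top
  | succ k ih =>
      intro R hR hle
      by_cases hTR : pCore p H ⊔ R ≤ R
      · exact case1 R (le_trans le_sup_left hTR)
      set Q := pCore p H with hQdef
      set C := Subgroup.centralizer (R : Set H) with hCdef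
      set X := Subgroup.map C.subtype (pPrimeCore p C) with hXdef
      set T := Q ⊔ R with hTdef
      have hQp : IsPGroup p Q := pCore_isPGroup p H
      have hTp : IsPGroup p T := IsPGroup.to_sup_of_normal_left hQp hR
      have hRT : R ≤ T := le_sup_right
      have hRltT : R < T := lt_of_le_of_ne hRT (fun h => hTR (le_of_eq h.symm))
      haveI : Group.IsNilpotent ↥T := hTp.isNilpotent
      have hnc := normalizerCondition_of_isNilpotent (G := ↥T)
      have hsubne : R.subgroupOf T < ⊤ := by
        refine lt_of_le_of_ne le_top ?_
        intro htop
        exact hTR (Subgroup.subgroupOf_eq_top.mp htop)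
      have hlt := hnc (R.subgroupOf T) hsubne
      obtain ⟨s, hs1, hs2⟩ := SetLike.exists_of_lt hlt
      have hsR : (s : H) ∉ R := fun h => hs2 (Subgroup.mem_subgroupOf.mpr h)
      have hsN : (s : H) ∈ (Subgroup.normalizer (R : Set H)) := by
        rw [Subgroup.mem_normalizer_iff]
        intro h
        constructor
        · intro hh
          have hhT : h ∈ T := hRT hh
          have h3 := (Subgroup.mem_normalizer_iff.mp hs1 ⟨h, hhT⟩).mp
            (Subgroup.mem_subgroupOf.mpr hh)
          exact Subgroup.mem_subgroupOf.mp h3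
        · intro hh
          have hhT : h ∈ T := by
            have h1 : (s : H) * h * (s : H)⁻¹ ∈ T := hRT hh
            have e : h = (s : H)⁻¹ * ((s : H) * h * (s : H)⁻¹) * (s : H) := by group
            rw [e]
            exact mul_mem (mul_mem (inv_mem s.2) h1) s.2
          have h3 := (Subgroup.mem_normalizer_iff.mp hs1 ⟨h, hhT⟩).mpr
            (Subgroup.mem_subgroupOf.mpr hh)
          exact Subgroup.mem_subgroupOf.mp h3
      set R₁ := T ⊓ (Subgroup.normalizer (R : Set H)) with hR1def
      have hR1p : IsPGroup p R₁ := hTp.to_le inf_le_left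
      have hRR1 : R < R₁ := by
        refine lt_of_le_of_ne (le_inf hRT Subgroup.le_normalizer) ?_
        intro heq
        exact hsR (by rw [heq]; exact Subgroup.mem_inf.mpr ⟨s.2, hsN⟩)
      have hcardlt : Nat.card R < Nat.card R₁ := by
        obtain ⟨z, hz1, hz2⟩ := SetLike.exists_of_lt hRR1
        have hssub : (R : Set H) ⊂ (R₁ : Set H) :=
          (Set.ssubset_iff_of_subset (fun y hy => (le_of_lt hRR1) hy)).mpr ⟨z, hz1, hz2⟩
        have h4 := Set.ncard_lt_ncard hssub (Set.toFinite _)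
        rw [← Nat.card_coe_set_eq, ← Nat.card_coe_set_eq] at h4
        exact h4
      have hXC : X ≤ C := thetaMap_le
      have hXco : Nat.Coprime (Nat.card X) p := thetaMap_coprime _
      have hconjX : ∀ n ∈ (Subgroup.normalizer (R : Set H)), ∀ x ∈ X, n * x * n⁻¹ ∈ X := by
        intro n hn x hx
        exact thetaMap_conj_mem_of_normalizes
          (fun c hc => centralizer_conj_mem hn hc)
          (fun c hc => by
            have h5 := centralizer_conj_mem (inv_mem hn) hc
            simpa using h5) hx
      have hCnorm : ∀ y ∈ C, ∀ r ∈ R₁, y * r * y⁻¹ ∈ R₁ := by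
        intro y hyC r hr
        obtain ⟨hrT, hrN⟩ := Subgroup.mem_inf.mp hr
        have hyN : y ∈ (Subgroup.normalizer (R : Set H)) := centralizer_le_normalizer' hyC
        refine Subgroup.mem_inf.mpr ⟨?_, ?_⟩
        · rw [← SetLike.mem_coe, hTdef, Subgroup.normal_mul, Set.mem_mul] at hrT
          obtain ⟨q, hq, r', hr', rfl⟩ := hrT
          have h1 : y * q * y⁻¹ ∈ Q := (pCore_normal p H).conj_mem q hq y
          have hcomm := Subgroup.mem_centralizer_iff.mp hyC r' hr'
          have h2 : y * r' * y⁻¹ = r' := by rw [← hcomm]; group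
          have e : y * (q * r') * y⁻¹ = (y * q * y⁻¹) * (y * r' * y⁻¹) := by group
          rw [e, h2]
          exact mul_mem (Subgroup.mem_sup_left h1) (Subgroup.mem_sup_right hr')
        · exact mul_mem (mul_mem hyN hrN) (inv_mem hyN)
      have hXcent : X ≤ Subgroup.centralizer (R₁ : Set H) := by
        intro x hx
        have hxC : x ∈ C := hXC hx
        rw [Subgroup.mem_centralizer_iff]
        intro r hrmem
        have hr : r ∈ R₁ := hrmem
        obtain ⟨hrT, hrN⟩ := Subgroup.mem_inf.mp hr
        have h1 : x⁻¹ * r⁻¹ * x ∈ R₁ := by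
          have h6 := hCnorm x⁻¹ (inv_mem hxC) r⁻¹ (inv_mem hr)
          simpa using h6
        have h2 : r⁻¹ * x * r ∈ X := by
          have h7 := hconjX r⁻¹ (inv_mem hrN) x hx
          simpa using h7
        have hc1 : (x⁻¹ * r⁻¹ * x) * r ∈ R₁ := mul_mem h1 hr
        have hc2 : x⁻¹ * (r⁻¹ * x * r) ∈ X := mul_mem (inv_mem hx) h2
        have heqc : x⁻¹ * (r⁻¹ * x * r) = (x⁻¹ * r⁻¹ * x) * r := by group
        rw [heqc] at hc2
        have hone : (x⁻¹ * r⁻¹ * x) * r = 1 :=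
          eq_one_of_mem_pgroup_coprime hR1p hXco hc1 hc2
        have heqx : x = r⁻¹ * x * r := by
          apply inv_mul_eq_one.mp
          rw [← heqc] at hone
          exact hone
        conv_lhs => rw [heqx]
        group
      have hC1C : Subgroup.centralizer (R₁ : Set H) ≤ C :=
        Subgroup.centralizer_le (fun y hy => (le_of_lt hRR1) hy)
      have hfinal := le_thetaMap (K := Subgroup.centralizer (R₁ : Set H)) hXcent
          (fun c hc x hx => thetaMap_conj_mem (hC1C hc) hx) hXco
      rw [ih R₁ hR1p (by omega)] at hfinal
      exact le_bot_iff.mp hfinal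

end AuxProofs4


/-- Let `G` be a finite group which is almost of characteristic `p` and `P` a `p`-subgroup.
Then `O_{p'}(N_G(P)) = O_{p'}(G) ∩ N_G(P) = O_{p'}(G) ∩ C_G(P) = O_{p'}(C_G(P))`
(as subgroups of `G`). -/
theorem pPrimeCore_normalizer_eq (p : ℕ) [Fact p.Prime] (G : Type*) [Group G] [Finite G]
    (hG : IsAlmostCharP p G) (P : Subgroup G) (hP : IsPGroup p P) :
    Subgroup.map (Subgroup.normalizer (P : Set G)).subtype (pPrimeCore p (Subgroup.normalizer (P : Set G))) =
        pPrimeCore p G ⊓ (Subgroup.normalizer (P : Set G)) ∧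
      pPrimeCore p G ⊓ (Subgroup.normalizer (P : Set G)) =
        pPrimeCore p G ⊓ Subgroup.centralizer (P : Set G) ∧
      pPrimeCore p G ⊓ Subgroup.centralizer (P : Set G) =
        Subgroup.map (Subgroup.centralizer (P : Set G)).subtype
          (pPrimeCore p (Subgroup.centralizer (P : Set G))) := by
  have hPN : P ≤ (Subgroup.normalizer (P : Set G)) := Subgroup.le_normalizer
  have hPsub : IsPGroup p (P.subgroupOf (Subgroup.normalizer (P : Set G))) :=
    hP.of_equiv (Subgroup.subgroupOfEquivOfLe hPN).symm
  have hdisj : Disjoint (pPrimeCore p (Subgroup.normalizer (P : Set G))) (P.subgroupOf (Subgroup.normalizer (P : Set G))) := by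
    rw [disjoint_iff_inf_le]
    intro z hz
    obtain ⟨hz1, hz2⟩ := Subgroup.mem_inf.mp hz
    have h1 : z = 1 :=
      eq_one_of_mem_pgroup_coprime hPsub (pPrimeCore_coprime p _) hz2 hz1
    rw [h1]
    exact Subgroup.one_mem _
  -- Part 1 : the p'-core of the normalizer centralizes P
  have part1 : Subgroup.map (Subgroup.normalizer (P : Set G)).subtype (pPrimeCore p (Subgroup.normalizer (P : Set G))) ≤
      Subgroup.centralizer (P : Set G) := by
    rintro x hx
    rw [Subgroup.mem_centralizer_iff]
    intro u hu
    obtain ⟨⟨y, hyN⟩, hyθ, rfl⟩ := hx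
    have huN : u ∈ (Subgroup.normalizer (P : Set G)) := hPN hu
    have hcomm : Commute (⟨y, hyN⟩ : (Subgroup.normalizer (P : Set G))) (⟨u, huN⟩ : (Subgroup.normalizer (P : Set G))) :=
      Subgroup.commute_of_normal_of_disjoint _ _ (pPrimeCore_normal p _)
        Subgroup.normal_in_normalizer hdisj _ _ hyθ (Subgroup.mem_subgroupOf.mpr hu)
    have h9 : y * u = u * y := by
      have h10 := Subtype.ext_iff.mp hcomm.eq
      simpa using h10
    exact h9.symm
  -- Part 2 : the p'-core of the normalizer is contained in the p'-core of G
  have part2 : Subgroup.map (Subgroup.normalizer (P : Set G)).subtype (pPrimeCore p (Subgroup.normalizer (P : Set G))) ≤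
      pPrimeCore p G := by
    rw [← QuotientGroup.ker_mk' (pPrimeCore p G), ← Subgroup.map_eq_bot_iff]
    have hchar : IsCharP p (G ⧸ pPrimeCore p G) := hG
    have hPbar : IsPGroup p (P.map (QuotientGroup.mk' (pPrimeCore p G))) :=
      hP.map (QuotientGroup.mk' (pPrimeCore p G))
    have hbot := theta_centralizer_eq_bot p hchar
      (P.map (QuotientGroup.mk' (pPrimeCore p G))) hPbar
    refine le_bot_iff.mp ?_
    rw [← hbot]
    apply le_thetaMap
    · rintro _ ⟨x, hx, rfl⟩
      rw [Subgroup.mem_centralizer_iff]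
      rintro _ ⟨u, hu, rfl⟩
      have hcx : x ∈ Subgroup.centralizer (P : Set G) := part1 hx
      have h10 := Subgroup.mem_centralizer_iff.mp hcx u hu
      rw [← map_mul, ← map_mul, h10]
    · intro kk hkk y hy
      obtain ⟨c, hc, hck⟩ := exists_centralizer_lift p P hP kk hkk
      obtain ⟨x, hx, rfl⟩ := hy
      have hcN : c ∈ (Subgroup.normalizer (P : Set G)) := centralizer_le_normalizer' hc
      have h8 : c * x * c⁻¹ ∈
          Subgroup.map (Subgroup.normalizer (P : Set G)).subtype (pPrimeCore p (Subgroup.normalizer (P : Set G))) :=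
        thetaMap_conj_mem hcN hx
      refine ⟨c * x * c⁻¹, h8, ?_⟩
      rw [map_mul, map_mul, map_inv, hck]
    · have hdvd : Nat.card (Subgroup.map (QuotientGroup.mk' (pPrimeCore p G))
            (Subgroup.map (Subgroup.normalizer (P : Set G)).subtype (pPrimeCore p (Subgroup.normalizer (P : Set G)))))
          ∣ Nat.card (Subgroup.map (Subgroup.normalizer (P : Set G)).subtype (pPrimeCore p (Subgroup.normalizer (P : Set G)))) :=
        Subgroup.card_dvd_of_surjective
          ((QuotientGroup.mk' (pPrimeCore p G)).subgroupMap _)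
          (MonoidHom.subgroupMap_surjective _ _)
      exact Nat.Coprime.coprime_dvd_left hdvd (thetaMap_coprime _)
  -- Part 3
  have part3 : pPrimeCore p G ⊓ (Subgroup.normalizer (P : Set G)) ≤
      Subgroup.map (Subgroup.normalizer (P : Set G)).subtype (pPrimeCore p (Subgroup.normalizer (P : Set G))) := by
    apply le_thetaMap
    · exact inf_le_right
    · intro n hn z hz
      obtain ⟨hz1, hz2⟩ := Subgroup.mem_inf.mp hz
      exact Subgroup.mem_inf.mpr ⟨(pPrimeCore_normal p G).conj_mem z hz1 n,
        mul_mem (mul_mem hn hz2) (inv_mem hn)⟩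
    · exact Nat.Coprime.coprime_dvd_left (Subgroup.card_dvd_of_le inf_le_left)
        (pPrimeCore_coprime p G)
  -- Part 4
  have part4 : Subgroup.map (Subgroup.centralizer (P : Set G)).subtype
      (pPrimeCore p (Subgroup.centralizer (P : Set G))) ≤
      Subgroup.map (Subgroup.normalizer (P : Set G)).subtype (pPrimeCore p (Subgroup.normalizer (P : Set G))) := by
    apply le_thetaMap
    · exact le_trans thetaMap_le centralizer_le_normalizer'
    · intro n hn x hx
      exact thetaMap_conj_mem_of_normalizes
        (fun c hc => centralizer_conj_mem hn hc)
        (fun c hc => by simpa using centralizer_conj_mem (inv_mem hn) hc) hx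
    · exact thetaMap_coprime _
  -- Part 5
  have part5 : pPrimeCore p G ⊓ Subgroup.centralizer (P : Set G) ≤
      Subgroup.map (Subgroup.centralizer (P : Set G)).subtype
        (pPrimeCore p (Subgroup.centralizer (P : Set G))) := by
    apply le_thetaMap
    · exact inf_le_right
    · intro c hc z hz
      obtain ⟨hz1, hz2⟩ := Subgroup.mem_inf.mp hz
      exact Subgroup.mem_inf.mpr ⟨(pPrimeCore_normal p G).conj_mem z hz1 c,
        mul_mem (mul_mem hc hz2) (inv_mem hc)⟩
    · exact Nat.Coprime.coprime_dvd_left (Subgroup.card_dvd_of_le inf_le_left)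
        (pPrimeCore_coprime p G)
  have E1 : Subgroup.map (Subgroup.normalizer (P : Set G)).subtype (pPrimeCore p (Subgroup.normalizer (P : Set G))) =
      pPrimeCore p G ⊓ (Subgroup.normalizer (P : Set G)) :=
    le_antisymm (le_inf part2 thetaMap_le) part3
  have E2 : pPrimeCore p G ⊓ (Subgroup.normalizer (P : Set G)) =
      pPrimeCore p G ⊓ Subgroup.centralizer (P : Set G) := by
    apply le_antisymm
    · refine le_inf inf_le_left ?_
      rw [← E1]
      exact part1
    · exact inf_le_inf_left _ centralizer_le_normalizer'
  have E3 : pPrimeCore p G ⊓ Subgroup.centralizer (P : Set G) =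
      Subgroup.map (Subgroup.centralizer (P : Set G)).subtype
        (pPrimeCore p (Subgroup.centralizer (P : Set G))) := by
    apply le_antisymm part5
    exact le_inf (le_trans part4 part2) thetaMap_le
  exact ⟨E1, E2, E3⟩
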